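/- arXiv:2505.24503 — 3 statements merged into one kernel-verified Lean document; each statement's English description precedes it below -/
import Mathlib

section
/- Consider two agents with identical additive valuation v with v(G) = 1, and a partition (A_1, A_2) of G such that v(A_1) ≤ (√5 − 1)/2 and every g ∈ A_2 satisfies v(g) > (√5 − 1)/2 − v(A_1). If additionally v(A_1) ≥ √5 − 2, then for every g ∈ A_2, v(A_1) ≥ ((√5 − 1)/2)·v(A_2 \ {g}), and moreover v(A_2) ≥ ((√5 − 1)/2)·v(A_1); hence the allocation is ((√5−1)/2)-EFX. -/
open Finset

/-- Identical valuations, `v(G) = 1`: if `v(A_1) ≤ (√5−1)/2`, every `g ∈ A_2` has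
`v(g) > (√5−1)/2 − v(A_1)`, and `v(A_1) ≥ √5 − 2`, then for every `g ∈ A_2`,
`v(A_1) ≥ ((√5−1)/2)·v(A_2 \ {g})`, and `v(A_2) ≥ ((√5−1)/2)·v(A_1)`. -/
theorem golden_EFX_case2 {G : Type*} [Fintype G] [DecidableEq G]
    (v : G → ℝ) (hv : ∀ g, 0 ≤ v g)
    (htot : ∑ g ∈ (univ : Finset G), v g = 1)
    (A1 A2 : Finset G) (hdisj : Disjoint A1 A2) (hcover : A1 ∪ A2 = univ)
    (h1 : (∑ g ∈ A1, v g) ≤ (Real.sqrt 5 - 1) / 2)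
    (h2 : ∀ g ∈ A2, v g > (Real.sqrt 5 - 1) / 2 - (∑ g' ∈ A1, v g'))
    (h3 : (∑ g ∈ A1, v g) ≥ Real.sqrt 5 - 2) :
    (∀ g ∈ A2, (∑ x ∈ A1, v x) ≥ (Real.sqrt 5 - 1) / 2 * ∑ x ∈ A2.erase g, v x) ∧
      (∑ x ∈ A2, v x) ≥ (Real.sqrt 5 - 1) / 2 * (∑ x ∈ A1, v x) := by
  have hs : Real.sqrt 5 ^ 2 = 5 := Real.sq_sqrt (by norm_num)
  have hs2 : 2 ≤ Real.sqrt 5 := by nlinarith [Real.sqrt_nonneg 5]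
  have hab : (∑ g ∈ A1, v g) + (∑ g ∈ A2, v g) = 1 := by
    rw [← Finset.sum_union hdisj, hcover]; exact htot
  constructor
  · intro g hg
    have he : ∑ x ∈ A2.erase g, v x = (∑ x ∈ A2, v x) - v g :=
      Finset.sum_erase_eq_sub hg
    have := h2 g hg
    rw [he]
    nlinarith
  · nlinarith
end

section
/- For the three-or-more-agent adversarial instance with identical additive valuation given by v(g_1) = v(g_2) = ε, v(g_3) = ⋯ = v(g_{n+1}) = (1−2ε)/(n−1) (so v(G) = 1), any allocation of the n+1 goods to n agents in which g_1 and g_2 go to distinct agents contains an agent i with v(A_i) ≤ ε and an agent j ≠ i with |A_j| ≥ 2 and v(A_j \ {g}) ≥ (1−2ε)/(n−1) for g = argmin_{g' ∈ A_j} v(g'). Hence the allocation is not γ-EFX whenever γ > (n−1)ε/(1−2ε). -/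
open Finset

/-- Adversarial identical-valuations instance for `n ≥ 3`: goods `g_1, g_2` of value `ε`
and `n − 1` goods of value `(1−2ε)/(n−1)`. If `g_1` and `g_2` go to distinct agents, then
some agent `i` has `v(A_i) ≤ ε` while some other agent `j` has `|A_j| ≥ 2` and
`v(A_j \ {g}) ≥ (1−2ε)/(n−1)` for a minimum-value `g ∈ A_j`; hence the allocation is not
`γ`-EFX for any `γ > (n−1)ε/(1−2ε)`. -/
theorem identical_norm_EFX_impossible (n : ℕ) (hn : 3 ≤ n)
    (ε : ℝ) (hε : 0 < ε) (hε4 : ε < 1 / 4)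
    (v : Fin (n + 1) → ℝ)
    (hv0 : v 0 = ε) (hv1 : v 1 = ε)
    (hvk : ∀ g : Fin (n + 1), 2 ≤ (g : ℕ) → v g = (1 - 2 * ε) / ((n : ℝ) - 1))
    (alloc : Fin (n + 1) → Fin n) (h01 : alloc 0 ≠ alloc 1) :
    (∃ i : Fin n,
      (∑ g ∈ univ.filter (fun x : Fin (n + 1) => alloc x = i), v g) ≤ ε ∧
      ∃ j : Fin n, j ≠ i ∧
        2 ≤ (univ.filter (fun x : Fin (n + 1) => alloc x = j)).card ∧
        ∃ g ∈ univ.filter (fun x : Fin (n + 1) => alloc x = j),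
          (∀ g' ∈ univ.filter (fun x : Fin (n + 1) => alloc x = j), v g ≤ v g') ∧
          (∑ g' ∈ (univ.filter (fun x : Fin (n + 1) => alloc x = j)).erase g, v g') ≥
            (1 - 2 * ε) / ((n : ℝ) - 1)) ∧
    ∀ γ : ℝ, γ > ((n : ℝ) - 1) * ε / (1 - 2 * ε) →
      ¬ (∀ i j : Fin n,
          (univ.filter (fun x : Fin (n + 1) => alloc x = j)).Nonempty →
          ∀ g ∈ univ.filter (fun x : Fin (n + 1) => alloc x = j),
            (∑ g' ∈ univ.filter (fun x : Fin (n + 1) => alloc x = i), v g') ≥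
              γ * ∑ g' ∈ (univ.filter (fun x : Fin (n + 1) => alloc x = j)).erase g, v g') := by
  have h0v : ((0 : Fin (n+1)) : ℕ) = 0 := rfl
  have h1v : ((1 : Fin (n+1)) : ℕ) = 1 := by
    simp [Fin.val_one', Nat.mod_eq_of_lt]; omega
  have hnR : (3:ℝ) ≤ (n:ℝ) := by exact_mod_cast hn
  have h2ε : 0 < 1 - 2 * ε := by linarith
  have hn1 : (0:ℝ) < (n:ℝ) - 1 := by linarith
  have hbigpos : 0 < (1 - 2 * ε) / ((n : ℝ) - 1) := div_pos h2ε hn1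
  have hcase : ∀ g : Fin (n+1), g = 0 ∨ g = 1 ∨ 2 ≤ (g:ℕ) := by
    intro g
    rcases Nat.lt_or_ge (g:ℕ) 2 with h | h
    · interval_cases hg : (g:ℕ)
      · left; exact Fin.ext (by omega)
      · right; left; exact Fin.ext (by omega)
    · right; right; exact h
  have hvpos : ∀ g : Fin (n+1), 0 < v g := by
    intro g
    rcases hcase g with rfl | rfl | h2
    · rw [hv0]; exact hε
    · rw [hv1]; exact hε
    · rw [hvk g h2]; exact hbigpos
  -- key: an agent whose bundle is within {0,1} has at most one good
  have key : ∀ k : Fin n, (∀ g ∈ univ.filter (fun x : Fin (n + 1) => alloc x = k),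
      (g:ℕ) < 2) → (univ.filter (fun x : Fin (n + 1) => alloc x = k)).card ≤ 1 := by
    intro k hk
    apply Finset.card_le_one.mpr
    intro a ha b hb
    have ha2 := hk a ha
    have hb2 := hk b hb
    have has := (mem_filter.mp ha).2
    have hbs := (mem_filter.mp hb).2
    rcases hcase a with rfl | rfl | h2 <;> rcases hcase b with rfl | rfl | h2' <;>
      first
        | rfl
        | (exfalso; omega)
        | (exfalso; exact h01 (has.trans hbs.symm))
        | (exfalso; exact h01 (hbs.trans has.symm))
  -- find agent i with no big good
  obtain ⟨i, hi⟩ : ∃ i : Fin n, ∀ g : Fin (n+1), 2 ≤ (g:ℕ) → alloc g ≠ i := by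
    by_contra h
    push_neg at h
    have hsub : (univ : Finset (Fin n)) ⊆
        (univ.filter (fun g : Fin (n+1) => 2 ≤ (g:ℕ))).image alloc := by
      intro k _
      obtain ⟨g, hg2, hgk⟩ := h k
      exact mem_image.mpr ⟨g, mem_filter.mpr ⟨mem_univ _, hg2⟩, hgk⟩
    have hc1 := card_le_card hsub
    rw [card_univ, Fintype.card_fin] at hc1
    have hc2 := card_image_le (s := univ.filter (fun g : Fin (n+1) => 2 ≤ (g:ℕ))) (f := alloc)
    have hsubn : ({0,1} : Finset (Fin (n+1))) ⊆
        univ.filter (fun g : Fin (n+1) => ¬ 2 ≤ (g:ℕ)) := by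
      intro x hx
      rcases mem_insert.mp hx with rfl | hx1
      · exact mem_filter.mpr ⟨mem_univ _, by omega⟩
      · rcases mem_singleton.mp hx1 with rfl
        exact mem_filter.mpr ⟨mem_univ _, by omega⟩
    have h01ne : (0 : Fin (n+1)) ≠ 1 := by
      intro heq
      have := congrArg Fin.val heq
      rw [h0v, h1v] at this
      omega
    have hc01 : ({0,1} : Finset (Fin (n+1))).card = 2 := by
      rw [card_insert_of_notMem (by simpa using h01ne), card_singleton]
    have hc3 := card_le_card hsubn
    rw [hc01] at hc3
    have hc4 := Finset.card_filter_add_card_filter_not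
      (s := (univ : Finset (Fin (n+1)))) (p := fun g : Fin (n+1) => 2 ≤ (g:ℕ))
    rw [card_univ, Fintype.card_fin] at hc4
    omega
  have hiA : ∀ g ∈ univ.filter (fun x : Fin (n + 1) => alloc x = i), (g:ℕ) < 2 := by
    intro g hg
    by_contra hge
    exact hi g (by omega) (mem_filter.mp hg).2
  have hicard := key i hiA
  -- value of A_i ≤ ε
  have hival : (∑ g ∈ univ.filter (fun x : Fin (n + 1) => alloc x = i), v g) ≤ ε := by
    rcases (univ.filter (fun x : Fin (n + 1) => alloc x = i)).eq_empty_or_nonempty with he | ⟨a, ha⟩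
    · rw [he, sum_empty]; linarith
    · have heq : univ.filter (fun x : Fin (n + 1) => alloc x = i) = {a} := by
        apply Finset.eq_singleton_iff_unique_mem.mpr
        exact ⟨ha, fun b hb => Finset.card_le_one.mp hicard b hb a ha⟩
      rw [heq, sum_singleton]
      have := hiA a ha
      rcases hcase a with rfl | rfl | h2
      · rw [hv0]
      · rw [hv1]
      · omega
  -- find agent j with at least two goods
  obtain ⟨j, hj2⟩ : ∃ j : Fin n,
      2 ≤ (univ.filter (fun x : Fin (n + 1) => alloc x = j)).card := by
    by_contra h
    push_neg at h
    have hsum : (univ : Finset (Fin (n+1))).card =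
        ∑ k ∈ (univ : Finset (Fin n)), (univ.filter (fun x : Fin (n+1) => alloc x = k)).card :=
      Finset.card_eq_sum_card_fiberwise (fun x _ => mem_univ (alloc x))
    rw [card_univ, Fintype.card_fin] at hsum
    have hle : ∑ k ∈ (univ : Finset (Fin n)),
        (univ.filter (fun x : Fin (n+1) => alloc x = k)).card ≤ ∑ _k ∈ (univ : Finset (Fin n)), 1 :=
      Finset.sum_le_sum (fun k _ => by have := h k; omega)
    rw [Finset.sum_const, card_univ, Fintype.card_fin, smul_eq_mul, mul_one] at hle
    omega
  have hji : j ≠ i := fun h => by rw [h] at hj2; omega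
  -- minimum good of A_j
  have hjne : (univ.filter (fun x : Fin (n + 1) => alloc x = j)).Nonempty :=
    card_pos.mp (by omega)
  obtain ⟨g, hg, hgmin⟩ := Finset.exists_min_image
    (univ.filter (fun x : Fin (n + 1) => alloc x = j)) v hjne
  -- A_j contains a big good
  obtain ⟨gb, hgb, hgb2⟩ : ∃ gb ∈ univ.filter (fun x : Fin (n + 1) => alloc x = j),
      2 ≤ (gb:ℕ) := by
    by_contra h
    push_neg at h
    have := key j (fun g' hg' => by have := h g' hg'; omega)
    omega
  -- erase-min sum bound
  have herase : (∑ g' ∈ (univ.filter (fun x : Fin (n + 1) => alloc x = j)).erase g, v g') ≥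
      (1 - 2 * ε) / ((n : ℝ) - 1) := by
    by_cases hbg : gb = g
    · -- min itself is big; any other element has value ≥ v g = big
      have hce : 1 ≤ ((univ.filter (fun x : Fin (n + 1) => alloc x = j)).erase g).card := by
        rw [Finset.card_erase_of_mem hg]; omega
      obtain ⟨g', hg'⟩ := card_pos.mp hce
      have hg'A := Finset.mem_of_mem_erase hg'
      have h1 : v g ≤ v g' := hgmin g' hg'A
      have h2 : v g' ≤ ∑ g'' ∈ (univ.filter (fun x : Fin (n + 1) => alloc x = j)).erase g, v g'' :=
        Finset.single_le_sum (fun x _ => (hvpos x).le) hg'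
      rw [← hbg, hvk gb hgb2] at h1
      linarith
    · have hmem : gb ∈ (univ.filter (fun x : Fin (n + 1) => alloc x = j)).erase g :=
        Finset.mem_erase.mpr ⟨hbg, hgb⟩
      have h2 : v gb ≤ ∑ g'' ∈ (univ.filter (fun x : Fin (n + 1) => alloc x = j)).erase g, v g'' :=
        Finset.single_le_sum (fun x _ => (hvpos x).le) hmem
      rw [hvk gb hgb2] at h2
      linarith
  refine ⟨⟨i, hival, j, hji, hj2, g, hg, hgmin, herase⟩, ?_⟩
  intro γ hγ hEFX
  have hbound : 0 < ((n : ℝ) - 1) * ε / (1 - 2 * ε) := by positivity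
  have hγpos : 0 < γ := hbound.trans hγ
  have hEFXij := hEFX i j hjne g hg
  have h1 : γ * ((1 - 2 * ε) / ((n : ℝ) - 1)) ≤
      γ * ∑ g' ∈ (univ.filter (fun x : Fin (n + 1) => alloc x = j)).erase g, v g' :=
    mul_le_mul_of_nonneg_left herase hγpos.le
  have h2 : ((n : ℝ) - 1) * ε / (1 - 2 * ε) * ((1 - 2 * ε) / ((n : ℝ) - 1)) <
      γ * ((1 - 2 * ε) / ((n : ℝ) - 1)) :=
    mul_lt_mul_of_pos_right hγ hbigpos
  have h3 : ((n : ℝ) - 1) * ε / (1 - 2 * ε) * ((1 - 2 * ε) / ((n : ℝ) - 1)) = ε := by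
    field_simp
    exact div_self (ne_of_gt (by linarith))
  linarith
end

section
/- Let n = 2 and suppose an allocation (A_1, A_2) of goods with identical additive valuation v, v(G) = 1, satisfies: A_1 consists of k goods each of value ε plus possibly one good of value (1−kε)/2, and A_2 contains at least one good of value (1−kε)/2. If both goods of value (1−kε)/2 are in A_2, then γ-EFX forces γ ≤ 2kε/(1−kε); if exactly one is in A_2 and A_1 holds the k small goods plus the other, then γ-EFX forces γ ≤ (1−kε)/(kε − 2ε + 1). As ε → 0 with kε → √5 − 2, both bounds tend to (√5−1)/2. -/
open Finset

/-- Upper-bound instance for `(√5−1)/2`-EFX with two agents and identical valuations: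
`k` goods of value `ε` plus two goods of value `(1−kε)/2`, with `v(G) = 1`. If both big
goods lie in `A_2`, `γ`-EFX forces `γ ≤ 2kε/(1−kε)`; if `A_1` consists of the `k` small
goods plus one big good and `A_2` of the other big good, `γ`-EFX forces
`γ ≤ (1−kε)/(kε−2ε+1)`. As `ε → 0` with `kε → √5−2`, both bounds tend to `(√5−1)/2`. -/
theorem golden_upper_bound_instance {G : Type*} [Fintype G] [DecidableEq G]
    (v : G → ℝ) (hv : ∀ g, 0 ≤ v g)
    (ε : ℝ) (k : ℕ) (hk : 1 ≤ k) (hε : 0 < ε) (hkε : (k : ℝ) * ε < 1)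
    (small : Finset G) (hcard : small.card = k) (hsmall : ∀ g ∈ small, v g = ε)
    (b1 b2 : G) (hb : b1 ≠ b2) (hb1 : b1 ∉ small) (hb2 : b2 ∉ small)
    (hvb1 : v b1 = (1 - (k : ℝ) * ε) / 2) (hvb2 : v b2 = (1 - (k : ℝ) * ε) / 2)
    (hcoverG : (univ : Finset G) = insert b1 (insert b2 small))
    (htot : ∑ g ∈ (univ : Finset G), v g = 1)
    (A1 A2 : Finset G) (hdisj : Disjoint A1 A2) (hcover : A1 ∪ A2 = univ)
    (γ : ℝ)
    (hefx1 : ∀ g ∈ A2, (∑ x ∈ A1, v x) ≥ γ * ∑ x ∈ A2.erase g, v x)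
    (hefx2 : ∀ g ∈ A1, (∑ x ∈ A2, v x) ≥ γ * ∑ x ∈ A1.erase g, v x) :
    ((b1 ∈ A2 ∧ b2 ∈ A2) → γ ≤ 2 * ((k : ℝ) * ε) / (1 - (k : ℝ) * ε)) ∧
    ((A1 = insert b1 small ∧ A2 = {b2}) →
      γ ≤ (1 - (k : ℝ) * ε) / ((k : ℝ) * ε - 2 * ε + 1)) ∧
    (2 * (Real.sqrt 5 - 2) / (1 - (Real.sqrt 5 - 2)) = (Real.sqrt 5 - 1) / 2) ∧
    ((1 - (Real.sqrt 5 - 2)) / ((Real.sqrt 5 - 2) + 1) = (Real.sqrt 5 - 1) / 2) := by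
  have hkpos : (0:ℝ) < (k:ℝ) * ε := by positivity
  have hk1 : (1:ℝ) ≤ (k:ℝ) := by exact_mod_cast hk
  have hek : ε ≤ (k:ℝ) * ε := by nlinarith
  have hsum_small : ∑ x ∈ small, v x = (k:ℝ) * ε := by
    rw [Finset.sum_congr rfl hsmall, Finset.sum_const, hcard, nsmul_eq_mul]
  refine ⟨?_, ?_, ?_, ?_⟩
  · rintro ⟨h1, h2⟩
    have hA1sub : A1 ⊆ small := by
      intro g hg
      have hgu : g ∈ (univ : Finset G) := Finset.mem_univ g
      rw [hcoverG] at hgu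
      have hgA2 : g ∉ A2 := fun hA2 => (Finset.disjoint_left.mp hdisj hg) hA2
      rcases Finset.mem_insert.mp hgu with rfl | hgu
      · exact absurd h1 hgA2
      rcases Finset.mem_insert.mp hgu with rfl | hgu
      · exact absurd h2 hgA2
      · exact hgu
    have hA1le : ∑ x ∈ A1, v x ≤ (k:ℝ) * ε := by
      rw [← hsum_small]
      exact Finset.sum_le_sum_of_subset_of_nonneg hA1sub (fun i _ _ => hv i)
    have hb2e : b2 ∈ A2.erase b1 := Finset.mem_erase.mpr ⟨hb.symm, h2⟩
    have hlow : v b2 ≤ ∑ x ∈ A2.erase b1, v x :=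
      Finset.single_le_sum (fun i _ => hv i) hb2e
    have hefx := hefx1 b1 h1
    rcases le_or_gt γ 0 with hγ | hγ
    · have : (0:ℝ) ≤ 2 * ((k : ℝ) * ε) / (1 - (k : ℝ) * ε) :=
        div_nonneg (by positivity) (by linarith)
      linarith
    · rw [le_div_iff₀ (by linarith)]
      nlinarith [mul_le_mul_of_nonneg_left hlow hγ.le]
  · rintro ⟨hA1, hA2⟩
    obtain ⟨s, hs⟩ : small.Nonempty := Finset.card_pos.mp (hcard ▸ hk)
    have hsA1 : s ∈ A1 := by rw [hA1]; exact Finset.mem_insert_of_mem hs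
    have hefx := hefx2 s hsA1
    have hsne : s ≠ b1 := fun h => hb1 (h ▸ hs)
    have herase : A1.erase s = insert b1 (small.erase s) := by
      rw [hA1, Finset.erase_insert_of_ne (Ne.symm hsne)]
    have hsum1 : ∑ x ∈ A1.erase s, v x = (1 - (k:ℝ)*ε)/2 + ((k:ℝ)*ε - ε) := by
      rw [herase, Finset.sum_insert (fun h => hb1 (Finset.mem_of_mem_erase h)),
        Finset.sum_erase_eq_sub hs, hsum_small, hvb1, hsmall s hs]
    have hsum2 : ∑ x ∈ A2, v x = (1 - (k:ℝ)*ε)/2 := by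
      rw [hA2, Finset.sum_singleton, hvb2]
    rw [hsum1, hsum2] at hefx
    rw [le_div_iff₀ (by linarith)]
    nlinarith
  · have h5 : Real.sqrt 5 ^ 2 = 5 := Real.sq_sqrt (by norm_num)
    have h5lt : Real.sqrt 5 < 3 := by nlinarith [Real.sqrt_nonneg 5]
    rw [div_eq_div_iff (by linarith) (by norm_num)]
    nlinarith
  · have h5 : Real.sqrt 5 ^ 2 = 5 := Real.sq_sqrt (by norm_num)
    have h5gt : 1 < Real.sqrt 5 := by nlinarith [Real.sqrt_nonneg 5]
    rw [div_eq_div_iff (by linarith) (by norm_num)]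
    nlinarith
end
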